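/- arXiv:2406.06418 — 6 statements merged into one kernel-verified Lean document; each statement's English description precedes it below -/
import Mathlib

section
/- For every integer d ≥ 1 and every unit vector ψ ∈ ℂ^d, the 1-norm lower bound Σ_{l=0}^{d−1} Σ_{m=0}^{d−1} |⟨ψ, O_{l,m} ψ⟩| ≥ d holds; equivalently, the magic measure ‖x_ψ‖₁ = Σ_{l,m∈{0,…,d−1}} |d^{−1}⟨ψ, O_{l,m} ψ⟩| is at least 1 for every pure state. -/
open Complex Matrix Finset

/-- The operator `O_{l,m}`: the `d × d` complex matrix whose `(u, x)` entry is
`e^{-iπml/d} · ω_d^{m x}` if `u ≡ l - x (mod d)`, and `0` otherwise,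
where `ω_d = exp(2πi/d)`. -/
noncomputable def Omat (d : ℕ) (l m : ℤ) : Matrix (Fin d) (Fin d) ℂ :=
  Matrix.of fun u x =>
    if (d : ℤ) ∣ (((u : ℕ) : ℤ) + ((x : ℕ) : ℤ) - l) then
      Complex.exp (-((Real.pi : ℂ) * Complex.I * m * l) / d) *
        Complex.exp (2 * (Real.pi : ℂ) * Complex.I * m * ((x : ℕ) : ℂ) / d)
    else 0

private lemma nat_mod_two (d a : ℕ) (hd : 0 < d) (h : a < 2*d) :
    a % d = if a < d then a else a - d := by
  split_ifs with h'
  · exact Nat.mod_eq_of_lt h'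
  · rw [Nat.mod_eq_sub_mod (le_of_not_gt h'), Nat.mod_eq_of_lt (by omega)]

private lemma int_dvd_small (d z : ℤ) (hd : 0 < d) (h1 : -d < z) (h2 : z < 2*d) :
    d ∣ z ↔ z = 0 ∨ z = d := by
  constructor
  · rintro ⟨c, rfl⟩
    have hc0 : 0 ≤ c := by
      by_contra hcon; push_neg at hcon
      have : d * c ≤ d * (-1) := mul_le_mul_of_nonneg_left (by omega) hd.le
      linarith
    have hc1 : c ≤ 1 := by
      by_contra hcon; push_neg at hcon
      have : d * 2 ≤ d * c := mul_le_mul_of_nonneg_left (by omega) hd.le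
      linarith
    interval_cases c
    · left; ring
    · right; ring
  · rintro (rfl | rfl)
    · exact dvd_zero d
    · exact Dvd.intro 1 (by ring)

private def sig (d : ℕ) (hd : 0 < d) (l : ℕ) (x : Fin d) : Fin d :=
  ⟨(l + d - x.val) % d, Nat.mod_lt _ hd⟩

private lemma sig_spec (d : ℕ) (hd : 0 < d) (l : ℕ) (hl : l < d) (x u : Fin d) :
    sig d hd l x = u ↔ (u.val + x.val = l ∨ u.val + x.val = l + d) := by
  have hx := x.isLt; have hu := u.isLt
  simp only [sig, Fin.ext_iff]
  rw [nat_mod_two d _ hd (by omega)]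
  split_ifs <;> omega

private lemma sig_sig (d : ℕ) (hd : 0 < d) (l : ℕ) (hl : l < d) (x : Fin d) :
    sig d hd l (sig d hd l x) = x := by
  have h1 : sig d hd l x = sig d hd l x := rfl
  rw [sig_spec d hd l hl] at h1
  rw [sig_spec d hd l hl]
  have := (sig d hd l x).isLt; have := x.isLt
  omega

private lemma omat_dvd_iff (d : ℕ) (hd : 0 < d) (l : ℕ) (hl : l < d) (u x : Fin d) :
    (d:ℤ) ∣ (((u:ℕ):ℤ) + ((x:ℕ):ℤ) - (l:ℤ)) ↔ u = sig d hd l x := by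
  have hx := x.isLt; have hu := u.isLt
  rw [int_dvd_small _ _ (by exact_mod_cast hd) (by push_cast; omega) (by push_cast; omega),
      show (u = sig d hd l x) ↔ _ from eq_comm.trans (sig_spec d hd l hl x u)]
  push_cast; omega

private lemma zeta_sum (d : ℕ) (hd : 0 < d) (k : ℤ) :
    ∑ m ∈ Finset.range d, Complex.exp (2*(Real.pi:ℂ)*Complex.I/(d:ℂ)) ^ ((m:ℤ) * k)
      = if (d:ℤ) ∣ k then (d:ℂ) else 0 := by
  set ζ := Complex.exp (2*(Real.pi:ℂ)*Complex.I/(d:ℂ)) with hζ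
  have hprim := Complex.isPrimitiveRoot_exp d (by omega)
  have hstep : ∀ m : ℕ, ζ ^ ((m:ℤ) * k) = (ζ ^ k) ^ m := by
    intro m; rw [mul_comm, _root_.zpow_mul, zpow_natCast]
  simp only [hstep]
  by_cases hdvd : (d:ℤ) ∣ k
  · have h1 : ζ ^ k = 1 := (hprim.zpow_eq_one_iff_dvd k).mpr hdvd
    simp [h1, hdvd]
  · have h1 : ζ ^ k ≠ 1 := fun h => hdvd ((hprim.zpow_eq_one_iff_dvd k).mp h)
    rw [geom_sum_eq h1, if_neg hdvd]
    have h2 : (ζ ^ k) ^ d = 1 := by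
      rw [← zpow_natCast (ζ ^ k), ← _root_.zpow_mul, mul_comm, _root_.zpow_mul, zpow_natCast,
        hprim.pow_eq_one, _root_.one_zpow]
    rw [h2]; simp

/-- for every unit vector `ψ ∈ ℂ^d`,
`Σ_{l,m=0}^{d-1} |⟨ψ, O_{l,m} ψ⟩| ≥ d`; equivalently
`‖x_ψ‖₁ = Σ_{l,m} |d⁻¹ ⟨ψ, O_{l,m} ψ⟩| ≥ 1` for every pure state. -/
theorem Omat_one_norm_ge (d : ℕ) (hd : 1 ≤ d) (ψ : Fin d → ℂ)
    (hψ : ∑ i, ‖ψ i‖ ^ 2 = 1) :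
    (d : ℝ) ≤ ∑ l ∈ Finset.range d, ∑ m ∈ Finset.range d,
      ‖∑ u, star (ψ u) * (Omat d l m).mulVec ψ u‖ := by
  have hd0 : 0 < d := hd
  set ζ : ℂ := Complex.exp (2*(Real.pi:ℂ)*Complex.I/(d:ℂ)) with hζ
  have hζne : ζ ≠ 0 := Complex.exp_ne_zero _
  have hζabs : ‖ζ‖ = 1 := by
    rw [hζ, show (2*(Real.pi:ℂ)*Complex.I/(d:ℂ)) = ((2*Real.pi/d : ℝ):ℂ) * Complex.I by
      push_cast; ring]
    exact Complex.norm_exp_ofReal_mul_I _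
  have hζconj : ∀ k : ℤ, (starRingEnd ℂ) (ζ ^ k) = ζ ^ (-k) := by
    intro k
    rw [map_zpow₀, ← Complex.exp_conj, _root_.zpow_neg, ← _root_.inv_zpow]
    congr 2
    rw [← Complex.exp_neg]
    congr 1
    simp [map_div₀, Complex.conj_I, map_ofNat]
    ring
  set a : ℕ → Fin d → ℂ := fun l x => (starRingEnd ℂ) (ψ (sig d hd0 l x)) * ψ x with ha
  set S : ℕ → ℕ → ℂ := fun l m => ∑ x : Fin d, ζ ^ ((m:ℤ) * ((x:ℕ):ℤ)) * a l x with hS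
  have hnormψ : ∑ u, Complex.normSq (ψ u) = 1 := by
    simp only [← Complex.sq_norm]; exact hψ
  -- step 1 : the inner product equals phase * S l m
  have hc : ∀ l ∈ Finset.range d, ∀ m ∈ Finset.range d,
      (∑ u, star (ψ u) * (Omat d l m).mulVec ψ u)
        = Complex.exp (-((Real.pi:ℂ) * Complex.I * (m:ℂ) * (l:ℂ)) / d) * S l m := by
    intro l hl m hm
    rw [Finset.mem_range] at hl hm
    have hexp : ∀ x : Fin d,
        Complex.exp (2 * (Real.pi:ℂ) * Complex.I * ((m:ℤ):ℂ) * ((x:ℕ):ℂ) / d)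
          = ζ ^ ((m:ℤ) * ((x:ℕ):ℤ)) := by
      intro x
      rw [hζ, ← Complex.exp_int_mul]
      congr 1
      push_cast; ring
    simp only [Matrix.mulVec, dotProduct, Omat, Matrix.of_apply]
    rw [hS]
    simp only [Finset.mul_sum]
    rw [Finset.sum_comm]
    refine Finset.sum_congr rfl fun x _ => ?_
    simp only [ite_mul, mul_ite, zero_mul, mul_zero]
    simp only [omat_dvd_iff d hd0 l hl]
    rw [Finset.sum_ite_eq' Finset.univ (sig d hd0 l x)]
    simp only [Finset.mem_univ, if_true]
    rw [hexp x]
    simp only [ha, Complex.star_def]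
    push_cast
    ring
  have habs : ∀ l ∈ Finset.range d, ∀ m ∈ Finset.range d,
      ‖∑ u, star (ψ u) * (Omat d l m).mulVec ψ u‖ = ‖S l m‖ := by
    intro l hl m hm
    rw [hc l hl m hm, norm_mul,
      show (-((Real.pi:ℂ) * Complex.I * (m:ℂ) * (l:ℂ)) / d)
          = ((-(Real.pi*m*l)/d : ℝ):ℂ) * Complex.I by push_cast; ring,
      Complex.norm_exp_ofReal_mul_I, one_mul]
  have hsigsum : ∀ l, l < d → ∑ x : Fin d, Complex.normSq (ψ (sig d hd0 l x)) = 1 := by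
    intro l hl
    rw [← hnormψ]
    exact Fintype.sum_bijective _
      (Function.Involutive.bijective (fun x => sig_sig d hd0 l hl x)) _ _ (fun x => rfl)
  have habsS_le : ∀ l, l < d → ∀ m : ℕ, ‖S l m‖ ≤ 1 := by
    intro l hl m
    have h1 : ‖S l m‖
        ≤ ∑ x : Fin d, ‖ψ (sig d hd0 l x)‖ * ‖ψ x‖ := by
      refine (norm_sum_le _ _).trans_eq ?_
      refine Finset.sum_congr rfl fun x _ => ?_
      rw [norm_mul, norm_zpow, hζabs, _root_.one_zpow, one_mul, ha, norm_mul, Complex.norm_conj]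
    have e1 : ∑ x : Fin d, ‖ψ (sig d hd0 l x)‖ ^ 2 = 1 := by
      simp only [Complex.sq_norm]; exact hsigsum l hl
    have hcs := Finset.sum_mul_sq_le_sq_mul_sq Finset.univ
      (fun x => ‖ψ (sig d hd0 l x)‖) (fun x => ‖ψ x‖)
    rw [e1, hψ, one_mul] at hcs
    have hnn : (0:ℝ) ≤ ∑ x : Fin d, ‖ψ (sig d hd0 l x)‖ * ‖ψ x‖ :=
      Finset.sum_nonneg fun x _ => mul_nonneg (norm_nonneg _) (norm_nonneg _)
    nlinarith
  have hScc : ∀ (l : ℕ) (m : ℕ), S l m * (starRingEnd ℂ) (S l m)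
      = ∑ x : Fin d, ∑ y : Fin d,
          ζ ^ ((m:ℤ) * (((x:ℕ):ℤ) - ((y:ℕ):ℤ))) * (a l x * (starRingEnd ℂ) (a l y)) := by
    intro l m
    rw [hS]
    simp only
    rw [map_sum, Finset.sum_mul_sum]
    refine Finset.sum_congr rfl fun x _ => Finset.sum_congr rfl fun y _ => ?_
    rw [_root_.map_mul, hζconj]
    rw [show (m:ℤ) * (((x:ℕ):ℤ) - ((y:ℕ):ℤ)) = (m:ℤ)*((x:ℕ):ℤ) + -((m:ℤ)*((y:ℕ):ℤ)) by ring,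
      zpow_add₀ hζne]
    ring
  have hdvd_iff : ∀ x y : Fin d, (((d:ℤ) ∣ ((x:ℕ):ℤ) - ((y:ℕ):ℤ)) ↔ x = y) := by
    intro x y
    have hx := x.isLt; have hy := y.isLt
    rw [int_dvd_small _ _ (by exact_mod_cast hd0) (by push_cast; omega) (by push_cast; omega),
      Fin.ext_iff]
    push_cast; omega
  have hMsum : ∀ l : ℕ,
      ∑ m ∈ Finset.range d, S l m * (starRingEnd ℂ) (S l m)
        = (d:ℂ) * ∑ x : Fin d,
            ((Complex.normSq (ψ (sig d hd0 l x)) * Complex.normSq (ψ x) : ℝ) : ℂ) := by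
    intro l
    simp only [hScc]
    rw [Finset.sum_comm]
    rw [Finset.mul_sum]
    refine Finset.sum_congr rfl fun x _ => ?_
    rw [Finset.sum_comm]
    have hcol : ∀ y : Fin d,
        ∑ m ∈ Finset.range d,
            ζ ^ ((m:ℤ) * (((x:ℕ):ℤ) - ((y:ℕ):ℤ))) * (a l x * (starRingEnd ℂ) (a l y))
          = (if x = y then (d:ℂ) else 0) * (a l x * (starRingEnd ℂ) (a l y)) := by
      intro y
      rw [← Finset.sum_mul, zeta_sum d hd0]
      simp only [hdvd_iff]
    simp only [hcol, ite_mul, zero_mul]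
    rw [Finset.sum_ite_eq Finset.univ x]
    simp only [Finset.mem_univ, if_true]
    rw [Complex.mul_conj, show a l x = (starRingEnd ℂ) (ψ (sig d hd0 l x)) * ψ x from rfl,
      _root_.map_mul, Complex.normSq_conj]
  have hLsum : ∀ x : Fin d,
      ∑ l ∈ Finset.range d, Complex.normSq (ψ (sig d hd0 l x)) = 1 := by
    intro x
    rw [← hnormψ]
    refine Finset.sum_nbij' (fun l => sig d hd0 l x) (fun u => ((u:ℕ) + (x:ℕ)) % d)
      (fun l _ => Finset.mem_univ _) (fun u _ => Finset.mem_range.mpr (Nat.mod_lt _ hd0))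
      ?_ ?_ (fun l _ => rfl)
    · intro l hl
      rw [Finset.mem_range] at hl
      have hs : (sig d hd0 l x).val + x.val = l ∨ (sig d hd0 l x).val + x.val = l + d :=
        (sig_spec d hd0 l hl x _).mp rfl
      have h1 := (sig d hd0 l x).isLt; have h2 := x.isLt
      rw [nat_mod_two d _ hd0 (by omega)]
      split_ifs <;> omega
    · intro u _
      have h1 := u.isLt; have h2 := x.isLt
      refine (sig_spec d hd0 _ (Nat.mod_lt _ hd0) x u).mpr ?_
      rw [nat_mod_two d _ hd0 (by omega)]
      split_ifs <;> omega
  have hpar : ∑ l ∈ Finset.range d, ∑ m ∈ Finset.range d, ‖S l m‖ ^ 2 = (d:ℝ) := by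
    have hreal : ∑ l ∈ Finset.range d, ∑ x : Fin d,
        Complex.normSq (ψ (sig d hd0 l x)) * Complex.normSq (ψ x) = 1 := by
      rw [Finset.sum_comm]
      calc ∑ x : Fin d, ∑ l ∈ Finset.range d,
              Complex.normSq (ψ (sig d hd0 l x)) * Complex.normSq (ψ x)
          = ∑ x : Fin d, (∑ l ∈ Finset.range d,
              Complex.normSq (ψ (sig d hd0 l x))) * Complex.normSq (ψ x) := by
            exact Finset.sum_congr rfl fun x _ => (Finset.sum_mul _ _ _).symm
        _ = ∑ x : Fin d, Complex.normSq (ψ x) := by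
            exact Finset.sum_congr rfl fun x _ => by rw [hLsum x, one_mul]
        _ = 1 := hnormψ
    have key : ∑ l ∈ Finset.range d, ∑ m ∈ Finset.range d,
        (S l m * (starRingEnd ℂ) (S l m)) = (d:ℂ) := by
      calc ∑ l ∈ Finset.range d, ∑ m ∈ Finset.range d, (S l m * (starRingEnd ℂ) (S l m))
          = ∑ l ∈ Finset.range d, (d:ℂ) * ∑ x : Fin d,
              ((Complex.normSq (ψ (sig d hd0 l x)) * Complex.normSq (ψ x) : ℝ) : ℂ) :=
            Finset.sum_congr rfl fun l _ => hMsum l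
        _ = (d:ℂ) * ∑ l ∈ Finset.range d, ∑ x : Fin d,
              ((Complex.normSq (ψ (sig d hd0 l x)) * Complex.normSq (ψ x) : ℝ) : ℂ) := by
            rw [Finset.mul_sum]
        _ = (d:ℂ) := by
            rw [show ∑ l ∈ Finset.range d, ∑ x : Fin d,
                ((Complex.normSq (ψ (sig d hd0 l x)) * Complex.normSq (ψ x) : ℝ) : ℂ)
                = ((∑ l ∈ Finset.range d, ∑ x : Fin d,
                    Complex.normSq (ψ (sig d hd0 l x)) * Complex.normSq (ψ x) : ℝ) : ℂ) by
              push_cast; rfl]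
            rw [hreal]
            simp
    have e : ∀ z : ℂ, ((‖z‖ ^ 2 : ℝ) : ℂ) = z * (starRingEnd ℂ) z := by
      intro z; rw [Complex.sq_norm, Complex.mul_conj]
    have : ((∑ l ∈ Finset.range d, ∑ m ∈ Finset.range d,
        ‖S l m‖ ^ 2 : ℝ) : ℂ) = ((d:ℝ) : ℂ) := by
      rw [show ((∑ l ∈ Finset.range d, ∑ m ∈ Finset.range d,
          ‖S l m‖ ^ 2 : ℝ) : ℂ)
          = ∑ l ∈ Finset.range d, ∑ m ∈ Finset.range d,
            ((‖S l m‖ ^ 2 : ℝ) : ℂ) by push_cast; rfl]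
      simp only [e]
      rw [key]
      simp
    exact_mod_cast this
  calc (d:ℝ) = ∑ l ∈ Finset.range d, ∑ m ∈ Finset.range d, ‖S l m‖ ^ 2 := hpar.symm
    _ ≤ ∑ l ∈ Finset.range d, ∑ m ∈ Finset.range d, ‖S l m‖ := by
        refine Finset.sum_le_sum fun l hl => Finset.sum_le_sum fun m hm => ?_
        have h0 := norm_nonneg (S l m)
        have h1 := habsS_le l (Finset.mem_range.mp hl) m
        nlinarith
    _ = ∑ l ∈ Finset.range d, ∑ m ∈ Finset.range d,
          ‖∑ u, star (ψ u) * (Omat d l m).mulVec ψ u‖ :=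
        Finset.sum_congr rfl fun l hl => Finset.sum_congr rfl fun m hm => (habs l hl m hm).symm
end

section
/- For every integer d ≥ 1 and all integers l, m, l′, m′, conjugation by the SUM gate acts on the two-qudit operator basis as a symplectic linear map on the coordinates: SUM · (O_{l,m} ⊗ O_{l′,m′}) · SUM† = O_{l, m−m′} ⊗ O_{l+l′, m′}, where ⊗ denotes the Kronecker product. -/
open Complex Matrix Finset

open Kronecker

/-- The SUM gate `Σ_{i,j} |i⟩⟨i| ⊗ |(i+j) mod d⟩⟨j|` as a `d² × d²` matrix. -/
noncomputable def SUMmat (d : ℕ) : Matrix (Fin d × Fin d) (Fin d × Fin d) ℂ :=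
  Matrix.of fun u x =>
    if u.1 = x.1 ∧ (d : ℤ) ∣ (((u.2 : ℕ) : ℤ) - ((x.2 : ℕ) : ℤ) - ((x.1 : ℕ) : ℤ)) then 1 else 0

section aux
variable {d : ℕ} [NeZero d]

/-- the permutation implemented by SUM -/
def sumEquiv (d : ℕ) [NeZero d] : Fin d × Fin d ≃ Fin d × Fin d where
  toFun p := (p.1, p.2 + p.1)
  invFun p := (p.1, p.2 - p.1)
  left_inv p := by simp
  right_inv p := by simp

lemma fin_sub_val (a b : Fin d) :
    ∃ k : ℤ, (((a - b : Fin d) : ℕ) : ℤ) = (a : ℤ) - (b : ℤ) + d * k := by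
  have hb : (b : ℕ) ≤ d := le_of_lt b.isLt
  have h : (((a - b : Fin d) : ℕ) : ℤ) = ((d : ℤ) - b + a) % d := by
    rw [Fin.sub_def]
    push_cast [Nat.cast_sub hb]
    ring_nf
  refine ⟨1 - ((d : ℤ) - b + a) / d, ?_⟩
  rw [h, Int.emod_def]
  ring
 
lemma fin_add_val (a b : Fin d) :
    ∃ k : ℤ, (((a + b : Fin d) : ℕ) : ℤ) = (a : ℤ) + (b : ℤ) + d * k := by
  have h : (((a + b : Fin d) : ℕ) : ℤ) = ((a : ℤ) + b) % d := by
    rw [Fin.val_add]; push_cast; ring_nf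
  refine ⟨-(((a : ℤ) + b) / d), ?_⟩
  rw [h, Int.emod_def]
  ring

lemma SUMmat_apply (u a : Fin d × Fin d) :
    SUMmat d u a = if a = (sumEquiv d).symm u then 1 else 0 := by
  have hd : (0 : ℤ) < d := by
    have := Nat.pos_of_ne_zero (NeZero.ne d); exact_mod_cast this
  simp only [SUMmat, Matrix.of_apply]
  congr 1
  simp only [eq_iff_iff]
  constructor
  · rintro ⟨h1, h2⟩
    obtain ⟨k, hk⟩ := fin_sub_val u.2 u.1
    have : ((a.2 : ℕ) : ℤ) = (((u.2 - u.1 : Fin d) : ℕ) : ℤ) := by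
      have habs : |((a.2 : ℕ) : ℤ) - (((u.2 - u.1 : Fin d) : ℕ) : ℤ)| < d := by
        have h1 := a.2.isLt
        have h2 := (u.2 - u.1 : Fin d).isLt
        rw [abs_lt]; omega
      have hdvd : (d : ℤ) ∣ ((a.2 : ℕ) : ℤ) - (((u.2 - u.1 : Fin d) : ℕ) : ℤ) := by
        rw [hk]
        obtain ⟨q, hq⟩ := h2
        have h1' : ((a.1 : ℕ) : ℤ) = ((u.1 : ℕ) : ℤ) := by rw [h1]
        refine ⟨-q - k, ?_⟩
        linarith [hq]
      have := Int.eq_zero_of_abs_lt_dvd hdvd habs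
      omega
    have ha2 : a.2 = u.2 - u.1 := by
      apply Fin.ext; exact_mod_cast this
    cases u; cases a
    simp_all [_root_.sumEquiv, Prod.ext_iff]
  · rintro rfl
    simp only [_root_.sumEquiv, Equiv.coe_fn_symm_mk]
    refine ⟨by trivial, ?_⟩
    obtain ⟨k, hk⟩ := fin_sub_val u.2 u.1
    refine ⟨-k, ?_⟩
    rw [hk]; ring

lemma conj_entry (M : Matrix (Fin d × Fin d) (Fin d × Fin d) ℂ) (u x : Fin d × Fin d) :
    (SUMmat d * M * (SUMmat d)ᴴ) u x = M ((sumEquiv d).symm u) ((sumEquiv d).symm x) := by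
  simp [Matrix.mul_apply, SUMmat_apply, Matrix.conjTranspose_apply, apply_ite (star : ℂ → ℂ),
    Finset.sum_ite_eq, Finset.sum_ite_eq', ite_mul, mul_ite]

end aux

/-- conjugation by the SUM gate acts on the two-qudit operator basis as
a symplectic linear map: `SUM · (O_{l,m} ⊗ O_{l',m'}) · SUM† = O_{l,m-m'} ⊗ O_{l+l',m'}`. -/
theorem Omat_SUM_conj (d : ℕ) (hd : 1 ≤ d) (l m l' m' : ℤ) :
    SUMmat d * (Omat d l m ⊗ₖ Omat d l' m') * (SUMmat d)ᴴ =
      Omat d l (m - m') ⊗ₖ Omat d (l + l') m' := by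
  haveI : NeZero d := ⟨by omega⟩
  have hd0 : (d : ℂ) ≠ 0 := by exact_mod_cast (by omega : (d:ℕ) ≠ 0)
  ext ⟨u1, u2⟩ ⟨x1, x2⟩
  rw [conj_entry]
  simp only [_root_.sumEquiv, Equiv.coe_fn_symm_mk, Matrix.kroneckerMap_apply, Omat, Matrix.of_apply]
  obtain ⟨k2, hk2⟩ := fin_sub_val u2 u1
  obtain ⟨k3, hk3⟩ := fin_sub_val x2 x1
  by_cases h1 : (d : ℤ) ∣ (((u1 : ℕ) : ℤ) + ((x1 : ℕ) : ℤ) - l)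
  · obtain ⟨q, hq⟩ := h1
    have hiff : ((d:ℤ) ∣ ((((u2 - u1 : Fin d) : ℕ) : ℤ) + (((x2 - x1 : Fin d) : ℕ) : ℤ) - l')) ↔
        ((d:ℤ) ∣ (((u2 : ℕ) : ℤ) + ((x2 : ℕ) : ℤ) - (l + l'))) := by
      have harg : ((((u2 - u1 : Fin d) : ℕ) : ℤ) + (((x2 - x1 : Fin d) : ℕ) : ℤ) - l')
          = (d:ℤ) * (k2 + k3 - q) + (((u2 : ℕ) : ℤ) + ((x2 : ℕ) : ℤ) - (l + l')) := by
        rw [hk2, hk3]; linarith [hq]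
      rw [harg, dvd_add_right ⟨_, rfl⟩]
    by_cases h2 : (d:ℤ) ∣ (((u2 : ℕ) : ℤ) + ((x2 : ℕ) : ℤ) - (l + l'))
    · rw [if_pos ⟨q, hq⟩, if_pos (hiff.mpr h2), if_pos ⟨q, hq⟩, if_pos h2]
      have hc : (((x2 - x1 : Fin d) : ℕ) : ℂ)
          = ((x2 : ℕ) : ℂ) - ((x1 : ℕ) : ℂ) + (d : ℂ) * (k3 : ℂ) := by
        exact_mod_cast congrArg (fun z : ℤ => (z : ℂ)) hk3
      rw [hc]
      simp only [← Complex.exp_add]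
      apply Complex.exp_eq_exp_iff_exists_int.mpr
      refine ⟨m' * k3, ?_⟩
      push_cast
      field_simp
      ring
    · rw [if_neg (fun h => h2 (hiff.mp h)), if_neg h2, mul_zero, mul_zero]
  · rw [if_neg h1, if_neg h1, zero_mul, zero_mul]
end

section
/- Let d ≥ 2 be even and let P be the diagonal d×d phase-gate matrix with entries P|j⟩ = e^{iπj²/d}|j⟩ for j ∈ {0, …, d−1}. Then for all integers l, m, conjugation by P acts on the operator basis as P · O_{l,m} · P† = O_{l, m−l}. -/
open Complex Matrix Finset

/-- for even `d ≥ 2`, conjugation by the phase gate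
`P|j⟩ = e^{iπj²/d}|j⟩` acts as `P · O_{l,m} · P† = O_{l, m-l}`. -/
theorem Omat_phase_conj_even (d : ℕ) (hd : 2 ≤ d) (hde : Even d) (l m : ℤ)
    (P : Matrix (Fin d) (Fin d) ℂ)
    (hP : P = Matrix.of fun (u x : Fin d) =>
      if u = x then Complex.exp ((Real.pi : ℂ) * Complex.I * ((u : ℕ) : ℂ) ^ 2 / d) else 0) :
    P * Omat d l m * Pᴴ = Omat d l (m - l) := by
  have hd0 : (d : ℂ) ≠ 0 := Nat.cast_ne_zero.2 (by omega)
  have hPd : P = Matrix.diagonal (fun u : Fin d =>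
      Complex.exp ((Real.pi : ℂ) * Complex.I * ((u : ℕ) : ℂ) ^ 2 / d)) := by
    rw [hP]; rfl
  subst hPd
  ext u x
  rw [Matrix.diagonal_conjTranspose, Matrix.mul_diagonal, Matrix.diagonal_mul]
  simp only [Pi.star_apply, Omat, Matrix.of_apply]
  split_ifs with h
  · obtain ⟨k, hk⟩ := h
    obtain ⟨e, he⟩ := hde
    have hkC : ((u : ℕ) : ℂ) + ((x : ℕ) : ℂ) - (l : ℂ) = (d : ℂ) * (k : ℂ) := by
      exact_mod_cast congrArg (Int.cast : ℤ → ℂ) hk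
    have heC : (d : ℂ) = 2 * (e : ℂ) := by rw [he]; push_cast; ring
    have hstar : star (Complex.exp ((Real.pi : ℂ) * Complex.I * ((x : ℕ) : ℂ) ^ 2 / d))
        = Complex.exp (-((Real.pi : ℂ) * Complex.I * ((x : ℕ) : ℂ) ^ 2 / d)) := by
      rw [Complex.star_def, ← Complex.exp_conj]
      congr 1
      simp [map_div₀, Complex.conj_I]
      ring
    rw [hstar, ← Complex.exp_add, ← Complex.exp_add, ← Complex.exp_add, ← Complex.exp_add]
    rw [Complex.exp_eq_exp_iff_exists_int]
    refine ⟨k * (((u : ℕ) : ℤ) - k * (e : ℤ)), ?_⟩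
    push_cast
    field_simp
    linear_combination ((l:ℂ) + ((u:ℕ):ℂ) - ((x:ℕ):ℂ)) * hkC -
      (d:ℂ) * ((k:ℂ))^2 * heC -
      (d:ℂ) * (k:ℂ) * hkC
  · simp
end

section
/- Let d ≥ 1 be odd and let P be the diagonal d×d phase-gate matrix with entries P|j⟩ = ω_d^{j(j−1)/2}|j⟩ for j ∈ {0, …, d−1} (the exponent j(j−1)/2 is an integer). Then for all integers l, m, conjugation by P acts on the operator basis as P · O_{l,m} · P† = O_{l, m−l+1}. -/
open Complex Matrix Finset

lemma two_tri (n : ℕ) : 2 * (n * (n - 1) / 2) = n * (n - 1) := by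
  cases n with
  | zero => simp
  | succ m =>
    have h2 : (m + 1) * (m + 1 - 1) = m * (m + 1) := by
      simp [Nat.succ_sub_one, Nat.mul_comm]
    rw [h2]
    exact Nat.mul_div_cancel' ((Nat.even_mul_succ_self m).two_dvd) |>.symm ▸
      (Nat.mul_div_cancel' ((Nat.even_mul_succ_self m).two_dvd))

lemma tri_cast (n : ℕ) : (2 : ℂ) * ((n * (n - 1) / 2 : ℕ) : ℂ) = n * n - n := by
  have h : ((2 * (n * (n - 1) / 2) : ℕ) : ℂ) = ((n * (n - 1) : ℕ) : ℂ) := by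
    rw [two_tri]
  cases n with
  | zero => simp
  | succ m =>
    push_cast [Nat.succ_sub_one] at h ⊢
    linear_combination h

/-- for odd `d ≥ 1`, conjugation by the phase gate
`P|j⟩ = ω_d^{j(j-1)/2}|j⟩` acts as `P · O_{l,m} · P† = O_{l, m-l+1}`. -/
theorem Omat_phase_conj_odd (d : ℕ) (hd : 1 ≤ d) (hdo : Odd d) (l m : ℤ)
    (P : Matrix (Fin d) (Fin d) ℂ)
    (hP : P = Matrix.of fun (u x : Fin d) =>
      if u = x then
        Complex.exp (2 * (Real.pi : ℂ) * Complex.I * (((u : ℕ) * ((u : ℕ) - 1) / 2 : ℕ) : ℂ) / d)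
      else 0) :
    P * Omat d l m * Pᴴ = Omat d l (m - l + 1) := by
  have hd0 : (d : ℂ) ≠ 0 := by exact_mod_cast (by omega : d ≠ 0)
  set f : Fin d → ℂ := fun u =>
    Complex.exp (2 * (Real.pi : ℂ) * Complex.I * (((u : ℕ) * ((u : ℕ) - 1) / 2 : ℕ) : ℂ) / d) with hf
  have hPd : P = Matrix.diagonal f := hP
  subst hPd
  ext u x
  rw [Matrix.diagonal_conjTranspose, Matrix.mul_diagonal, Matrix.diagonal_mul]
  show f u * (Omat d l m u x) * star (f x) = Omat d l (m - l + 1) u x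
  unfold Omat
  simp only [Matrix.of_apply]
  by_cases h : (d : ℤ) ∣ (((u : ℕ) : ℤ) + ((x : ℕ) : ℤ) - l)
  · rw [if_pos h, if_pos h]
    obtain ⟨k, hk⟩ := h
    have hstar : star (f x) =
        Complex.exp (-(2 * (Real.pi : ℂ) * Complex.I * (((x : ℕ) * ((x : ℕ) - 1) / 2 : ℕ) : ℂ) / d)) := by
      rw [hf]
      simp only [Complex.star_def, ← Complex.exp_conj]
      congr 1
      simp [map_div₀, _root_.map_mul, map_ofNat, Complex.conj_I, Complex.conj_natCast, Complex.conj_ofReal]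
      ring
    rw [hstar, hf]
    rw [← Complex.exp_add, ← Complex.exp_add, ← Complex.exp_add, ← Complex.exp_add]
    obtain ⟨s, hs⟩ : ∃ s : ℤ, k * (k * d - 1) = 2 * s := by
      rcases Int.even_or_odd k with he | ho
      · obtain ⟨t, ht⟩ := he
        exact ⟨t * (k * d - 1), by rw [ht]; ring⟩
      · have hdz : Odd (d : ℤ) := by exact_mod_cast hdo
        obtain ⟨t, ht⟩ := ho.mul hdz
        exact ⟨k * t, by rw [mul_comm k ((d:ℤ))] at ht ⊢; rw [ht]; ring⟩
    rw [Complex.exp_eq_exp_iff_exists_int]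
    refine ⟨k * (l - (x : ℕ)) + s, ?_⟩
    have hu := tri_cast (u : ℕ)
    have hx := tri_cast (x : ℕ)
    have hkC : ((u : ℕ) : ℂ) + ((x : ℕ) : ℂ) - l = d * k := by exact_mod_cast hk
    have hsC : (k : ℂ) * (k * d - 1) = 2 * s := by exact_mod_cast hs
    field_simp
    push_cast
    linear_combination hu - hx +
        (((u:ℕ):ℂ) + l - ((x:ℕ):ℂ) + d * k - 1) * hkC +
      (d:ℂ) * hsC
  · rw [if_neg h, if_neg h]
    simp
end

section
/- Let d ≥ 1 be odd and let h = (d+1)/2, the multiplicative inverse of 2 modulo d. Define the Heisenberg–Weyl matrices P_d(b₁,b₂) = ω_d^{h·b₁b₂} X_d^{b₁} Z_d^{b₂}. Then for all integers a₁, a₂, the phase-space point operator coincides with the operator basis: O_{2a₁, −2a₂} = (1/d) Σ_{b₁=0}^{d−1} Σ_{b₂=0}^{d−1} ω_d^{a₁b₂ − a₂b₁} · P_d(b₁,b₂)†. -/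
open Complex Matrix Finset

/-- The clock matrix `Z_d = Σ_j ω_d^j |j⟩⟨j|`. -/
noncomputable def Zmat (d : ℕ) : Matrix (Fin d) (Fin d) ℂ :=
  Matrix.of fun u x =>
    if u = x then Complex.exp (2 * (Real.pi : ℂ) * Complex.I * ((u : ℕ) : ℂ) / d) else 0

/-- The shift matrix `X_d = Σ_j |(j+1) mod d⟩⟨j|`. -/
noncomputable def Xmat (d : ℕ) : Matrix (Fin d) (Fin d) ℂ :=
  Matrix.of fun u x =>
    if (d : ℤ) ∣ (((u : ℕ) : ℤ) - ((x : ℕ) : ℤ) - 1) then 1 else 0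

/-- The Heisenberg–Weyl matrix `P_d(b₁,b₂) = ω_d^{h·b₁b₂} X_d^{b₁} Z_d^{b₂}`,
where `h` is an integer (for odd `d` one takes `h = (d+1)/2`, the inverse of 2 mod d). -/
noncomputable def HWmat (d : ℕ) (h : ℕ) (b₁ b₂ : ℕ) : Matrix (Fin d) (Fin d) ℂ :=
  Complex.exp (2 * (Real.pi : ℂ) * Complex.I * (h : ℂ) * (b₁ : ℂ) * (b₂ : ℂ) / d) •
    (Xmat d ^ b₁ * Zmat d ^ b₂)

noncomputable def ee (d : ℕ) (k : ℤ) : ℂ :=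
  Complex.exp (2 * (Real.pi : ℂ) * Complex.I * (k : ℂ) / d)

lemma ee_add (d : ℕ) (j k : ℤ) : ee d (j + k) = ee d j * ee d k := by
  rw [ee, ee, ee, ← Complex.exp_add]
  congr 1
  push_cast
  ring

lemma ee_int_mul (d : ℕ) (m : ℤ) : ee d (d * m) = 1 := by
  rcases Nat.eq_zero_or_pos d with h | h
  · simp [ee, h]
  · have hd' : (d : ℂ) ≠ 0 := Nat.cast_ne_zero.2 h.ne'
    rw [ee]
    rw [show 2 * (Real.pi : ℂ) * Complex.I * ((d * m : ℤ) : ℂ) / d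
        = m * (2 * Real.pi * Complex.I) by
      push_cast
      field_simp]
    exact Complex.exp_int_mul_two_pi_mul_I m

lemma ee_dvd_sub (d : ℕ) {j k : ℤ} (h : (d : ℤ) ∣ j - k) : ee d j = ee d k := by
  obtain ⟨m, hm⟩ := h
  have : j = k + d * m := by linarith
  rw [this, ee_add, ee_int_mul, mul_one]

lemma ee_pow (d : ℕ) (k : ℤ) (n : ℕ) : ee d (k * n) = ee d k ^ n := by
  induction n with
  | zero => simp [ee]
  | succ n ih =>
    rw [pow_succ, ← ih, ← ee_add]
    congr 1
    push_cast
    ring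

lemma ee_ne_one (d : ℕ) (hd : 0 < d) {k : ℤ} (h : ¬ (d : ℤ) ∣ k) : ee d k ≠ 1 := by
  intro he
  apply h
  rw [ee, Complex.exp_eq_one_iff] at he
  obtain ⟨n, hn⟩ := he
  have hd' : (d : ℂ) ≠ 0 := Nat.cast_ne_zero.2 hd.ne'
  have h2 : (2 : ℂ) * Real.pi * Complex.I ≠ 0 := by
    simp [Complex.ofReal_ne_zero.2 Real.pi_ne_zero, Complex.I_ne_zero]
  have hk : (k : ℂ) = (n : ℂ) * d := by
    have hn' : 2 * (Real.pi : ℂ) * Complex.I * k = 2 * Real.pi * Complex.I * (n * d) := by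
      field_simp at hn
      linear_combination (2 * (Real.pi : ℂ) * Complex.I) * hn
    exact mul_left_cancel₀ h2 hn'
  have : k = n * d := by exact_mod_cast hk
  exact ⟨n, by linarith⟩

lemma sum_ee (d : ℕ) (hd : 0 < d) (k : ℤ) :
    ∑ b ∈ Finset.range d, ee d (k * b) = if (d : ℤ) ∣ k then (d : ℂ) else 0 := by
  by_cases h : (d : ℤ) ∣ k
  · simp only [h, if_true]
    have : ∀ b ∈ Finset.range d, ee d (k * b) = 1 := by
      intro b _
      have : (d : ℤ) ∣ k * b - 0 := by simpa using Dvd.dvd.mul_right h b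
      rw [ee_dvd_sub d this]
      simp [ee]
    rw [Finset.sum_congr rfl this]
    simp
  · simp only [h, if_false]
    have hne : ee d k ≠ 1 := ee_ne_one d hd h
    have : ∑ b ∈ Finset.range d, ee d (k * b) = ∑ b ∈ Finset.range d, ee d k ^ b := by
      refine Finset.sum_congr rfl fun b _ => ee_pow d k b
    rw [this, geom_sum_eq hne]
    have h1 : ee d k ^ d = 1 := by
      rw [← ee_pow]
      have h2 : ee d (k * d) = ee d 0 := ee_dvd_sub d (by simpa using dvd_mul_left (d : ℤ) k)
      rw [h2]
      simp [ee]
    rw [h1]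
    simp

lemma conj_ee (d : ℕ) (k : ℤ) : (starRingEnd ℂ) (ee d k) = ee d (-k) := by
  rw [ee, ee, ← Complex.exp_conj]
  congr 1
  simp [map_div₀, Complex.conj_I, map_ofNat]


lemma int_eq_of_dvd_sub (d : ℕ) {b b' : ℕ} (hb : b < d) (hb' : b' < d)
    (h : (d : ℤ) ∣ (b : ℤ) - (b' : ℤ)) : b = b' := by
  have := Int.eq_zero_of_abs_lt_dvd h (by
    rw [abs_sub_lt_iff]
    constructor <;> push_cast <;> omega)
  omega

lemma fin_eq_of_dvd (d : ℕ) {u v : Fin d} (h : (d : ℤ) ∣ ((u : ℕ) : ℤ) - ((v : ℕ) : ℤ)) :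
    u = v := by
  exact Fin.ext (int_eq_of_dvd_sub d u.isLt v.isLt h)

lemma Zmat_eq (d : ℕ) : Zmat d = Matrix.diagonal fun u : Fin d => ee d ((u : ℕ) : ℤ) := by
  ext u x
  rw [Matrix.diagonal_apply]
  rfl

lemma Zpow_apply (d : ℕ) (b : ℕ) (u x : Fin d) :
    (Zmat d ^ b) u x = if u = x then ee d (b * (x : ℕ)) else 0 := by
  rw [Zmat_eq, Matrix.diagonal_pow, Matrix.diagonal_apply]
  by_cases h : u = x
  · subst h
    rw [if_pos rfl, if_pos rfl, Pi.pow_apply, ← ee_pow]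
    congr 1
    ring
  · simp [h]

lemma Xpow_apply (d : ℕ) (hd : 0 < d) (b : ℕ) (u x : Fin d) :
    (Xmat d ^ b) u x = if (d : ℤ) ∣ ((u : ℕ) : ℤ) - ((x : ℕ) : ℤ) - b then 1 else 0 := by
  induction b generalizing u x with
  | zero =>
    rw [pow_zero, Matrix.one_apply]
    by_cases h : u = x
    · simp [h]
    · rw [if_neg h, if_neg]
      intro hdvd
      exact h (fin_eq_of_dvd d (by simpa using hdvd))
  | succ b ih =>
    rw [pow_succ, Matrix.mul_apply]
    have key : ∀ j : Fin d, (Xmat d ^ b) u j * Xmat d j x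
        = if (d : ℤ) ∣ ((u:ℕ):ℤ) - ((j:ℕ):ℤ) - b ∧ (d : ℤ) ∣ ((j:ℕ):ℤ) - ((x:ℕ):ℤ) - 1
          then 1 else 0 := by
      intro j
      rw [ih, Xmat]
      by_cases h1 : (d : ℤ) ∣ ((u:ℕ):ℤ) - ((j:ℕ):ℤ) - b <;>
        by_cases h2 : (d : ℤ) ∣ ((j:ℕ):ℤ) - ((x:ℕ):ℤ) - 1 <;>
        simp [Matrix.of_apply, h1, h2]
    simp only [key]
    -- unique j₀ with j₀ ≡ x + 1 (mod d)
    set t : ℤ := ((x : ℕ) : ℤ) + 1 with ht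
    have hdz : (d : ℤ) ≠ 0 := by exact_mod_cast hd.ne'
    have h1 := Int.emod_nonneg t hdz
    have h2 := Int.emod_lt_of_pos t (show (0:ℤ) < (d:ℤ) by exact_mod_cast hd)
    set j₀ : Fin d := ⟨(t % d).toNat, by omega⟩ with hj₀def
    have hj₀ : ((j₀ : ℕ) : ℤ) = t % d := by simp [hj₀def]; omega
    have hj₀dvd : (d : ℤ) ∣ ((j₀ : ℕ) : ℤ) - t := by
      rw [hj₀]
      exact ⟨-(t / d), by rw [Int.emod_def]; ring⟩
    rw [Finset.sum_eq_single j₀]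
    · push_cast
      by_cases hc : (d : ℤ) ∣ ((u:ℕ):ℤ) - ((x:ℕ):ℤ) - ((b:ℤ) + 1)
      · rw [if_pos, if_pos hc]
        constructor
        · -- d ∣ u - j₀ - b, from d ∣ u - x - 1 - b and d ∣ j₀ - (x+1)
          obtain ⟨k1, hk1⟩ := hj₀dvd
          obtain ⟨k2, hk2⟩ := hc
          exact ⟨k2 - k1, by push_cast at hk1 hk2 ⊢; linarith⟩
        · obtain ⟨k1, hk1⟩ := hj₀dvd
          exact ⟨k1, by push_cast at hk1 ⊢; linarith⟩
      · rw [if_neg, if_neg hc]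
        rintro ⟨c1, c2⟩
        apply hc
        obtain ⟨k1, hk1⟩ := hj₀dvd
        obtain ⟨k2, hk2⟩ := c1
        exact ⟨k2 + k1, by push_cast at hk1 hk2 ⊢; linarith⟩
    · intro j _ hj
      rw [if_neg]
      rintro ⟨-, c2⟩
      apply hj
      apply fin_eq_of_dvd d
      obtain ⟨k1, hk1⟩ := hj₀dvd
      obtain ⟨k2, hk2⟩ := c2
      exact ⟨k2 - k1, by push_cast at hk1 hk2 ⊢; linarith⟩
    · intro hmem
      exact absurd (Finset.mem_univ j₀) hmem

lemma XZ_apply (d : ℕ) (hd : 0 < d) (b₁ b₂ : ℕ) (u x : Fin d) :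
    (Xmat d ^ b₁ * Zmat d ^ b₂) u x =
      if (d : ℤ) ∣ ((u : ℕ) : ℤ) - ((x : ℕ) : ℤ) - b₁ then ee d (b₂ * (x : ℕ)) else 0 := by
  rw [Matrix.mul_apply]
  simp only [Zpow_apply]
  rw [Finset.sum_eq_single x]
  · rw [if_pos rfl, Xpow_apply d hd, ite_mul, one_mul, zero_mul]
  · intro j _ hj
    rw [if_neg hj, mul_zero]
  · intro hmem
    exact absurd (Finset.mem_univ x) hmem

lemma HWconj_apply (d : ℕ) (hd : 0 < d) (h b₁ b₂ : ℕ) (u x : Fin d) :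
    (HWmat d h b₁ b₂)ᴴ u x =
      if (d : ℤ) ∣ ((x : ℕ) : ℤ) - ((u : ℕ) : ℤ) - b₁ then
        ee d (-((h : ℤ) * b₁ * b₂) - b₂ * (u : ℕ)) else 0 := by
  rw [Matrix.conjTranspose_apply, HWmat, Matrix.smul_apply, XZ_apply d hd]
  have hc : Complex.exp (2 * (Real.pi : ℂ) * Complex.I * (h : ℂ) * (b₁ : ℂ) * (b₂ : ℂ) / d)
      = ee d ((h : ℤ) * b₁ * b₂) := by
    rw [ee]; congr 1; push_cast; ring
  rw [hc]
  by_cases hcond : (d : ℤ) ∣ ((x : ℕ) : ℤ) - ((u : ℕ) : ℤ) - b₁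
  · rw [if_pos hcond, if_pos hcond, smul_eq_mul, star_mul']
    rw [show (star (ee d ((h : ℤ) * b₁ * b₂)) : ℂ) = (starRingEnd ℂ) (ee d ((h : ℤ) * b₁ * b₂)) from rfl,
      show (star (ee d ((b₂ : ℤ) * (u : ℕ))) : ℂ) = (starRingEnd ℂ) (ee d ((b₂ : ℤ) * (u : ℕ))) from rfl,
      conj_ee, conj_ee, ← ee_add, ← sub_eq_add_neg]
  · rw [if_neg hcond, if_neg hcond, smul_zero, star_zero]


/-- for odd `d` with `h = (d+1)/2` (the inverse of 2 mod d), the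
phase-space point operator coincides with the operator basis:
`O_{2a₁,-2a₂} = (1/d) Σ_{b₁,b₂=0}^{d-1} ω_d^{a₁b₂ - a₂b₁} · P_d(b₁,b₂)†`. -/
theorem Omat_phase_space_point (d : ℕ) (hd : 1 ≤ d) (hdo : Odd d) (a₁ a₂ : ℤ) :
    Omat d (2 * a₁) (-(2 * a₂)) =
      (1 / (d : ℂ)) • ∑ b₁ ∈ Finset.range d, ∑ b₂ ∈ Finset.range d,
        Complex.exp (2 * (Real.pi : ℂ) * Complex.I *
            ((a₁ * b₂ - a₂ * b₁ : ℤ) : ℂ) / d) • (HWmat d ((d + 1) / 2) b₁ b₂)ᴴ := by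
  have hd0 : 0 < d := hd
  have hdz : (d : ℤ) ≠ 0 := by exact_mod_cast hd0.ne'
  have hdzC : (d : ℂ) ≠ 0 := Nat.cast_ne_zero.2 hd0.ne'
  set hh : ℕ := (d + 1) / 2 with hhdef
  ext u x
  simp only [Matrix.smul_apply, Matrix.sum_apply, smul_eq_mul]
  have Hterm : ∀ b₁ b₂ : ℕ,
      Complex.exp (2 * (Real.pi : ℂ) * Complex.I * ((a₁ * b₂ - a₂ * b₁ : ℤ) : ℂ) / d) *
        ((HWmat d hh b₁ b₂)ᴴ u x)
      = if (d : ℤ) ∣ ((x : ℕ) : ℤ) - ((u : ℕ) : ℤ) - b₁ then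
          ee d (-(a₂ * b₁)) * ee d ((a₁ - (hh : ℤ) * b₁ - ((u : ℕ) : ℤ)) * b₂) else 0 := by
    intro b₁ b₂
    rw [HWconj_apply d hd0]
    have e1 : Complex.exp (2 * (Real.pi : ℂ) * Complex.I * ((a₁ * b₂ - a₂ * b₁ : ℤ) : ℂ) / d)
        = ee d (a₁ * b₂ - a₂ * b₁) := rfl
    rw [e1]
    by_cases hcond : (d : ℤ) ∣ ((x : ℕ) : ℤ) - ((u : ℕ) : ℤ) - b₁
    · rw [if_pos hcond, if_pos hcond, ← ee_add, ← ee_add]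
      congr 1
      push_cast
      ring
    · rw [if_neg hcond, if_neg hcond, mul_zero]
  rw [Finset.sum_congr rfl fun b₁ _ => Finset.sum_congr rfl fun b₂ _ => Hterm b₁ b₂]
  have hnn := Int.emod_nonneg (((x : ℕ) : ℤ) - ((u : ℕ) : ℤ)) hdz
  have hlt := Int.emod_lt_of_pos (((x : ℕ) : ℤ) - ((u : ℕ) : ℤ))
    (show (0 : ℤ) < (d : ℤ) by exact_mod_cast hd0)
  set b₀ : ℕ := ((((x : ℕ) : ℤ) - ((u : ℕ) : ℤ)) % d).toNat with hb₀def
  have hb₀lt : b₀ < d := by omega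
  have hb₀cast : ((b₀ : ℕ) : ℤ) = (((x : ℕ) : ℤ) - ((u : ℕ) : ℤ)) % d := by
    simp [hb₀def]; omega
  have hb₀dvd : (d : ℤ) ∣ ((b₀ : ℕ) : ℤ) - (((x : ℕ) : ℤ) - ((u : ℕ) : ℤ)) :=
    ⟨-(((((x : ℕ) : ℤ) - ((u : ℕ) : ℤ))) / d), by rw [hb₀cast, Int.emod_def]; ring⟩
  rw [Finset.sum_eq_single b₀]
  rotate_left
  · intro b hbmem hb
    refine Finset.sum_eq_zero fun b₂ _ => ?_
    rw [if_neg]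
    intro hcond
    apply hb
    refine int_eq_of_dvd_sub d (Finset.mem_range.1 hbmem) hb₀lt ?_
    obtain ⟨k1, hk1⟩ := hcond
    obtain ⟨k2, hk2⟩ := hb₀dvd
    exact ⟨-k1 - k2, by push_cast at hk1 hk2 ⊢; linarith⟩
  · intro hmem
    exact absurd (Finset.mem_range.2 hb₀lt) hmem
  have hcond0 : (d : ℤ) ∣ ((x : ℕ) : ℤ) - ((u : ℕ) : ℤ) - b₀ := by
    obtain ⟨k2, hk2⟩ := hb₀dvd
    exact ⟨-k2, by linarith⟩
  simp only [if_pos hcond0]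
  rw [← Finset.mul_sum, sum_ee d hd0]
  -- condition equivalence
  have h2u : IsUnit (2 : ZMod d) := by
    have hcop : Nat.Coprime 2 d := Nat.coprime_two_left.2 hdo
    simpa using (ZMod.isUnit_iff_coprime 2 d).2 hcop
  have h2h : (2 : ZMod d) * (hh : ZMod d) = 1 := by
    obtain ⟨e, he⟩ := hdo
    have h2hh : (2 * hh : ℕ) = d + 1 := by omega
    calc (2 : ZMod d) * (hh : ZMod d) = ((2 * hh : ℕ) : ZMod d) := by push_cast; ring
      _ = ((d + 1 : ℕ) : ZMod d) := by rw [h2hh]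
      _ = 1 := by push_cast; simp [ZMod.natCast_self]
  have hbz : ((b₀ : ℕ) : ZMod d) = (((x : Fin d) : ℕ) : ZMod d) - (((u : Fin d) : ℕ) : ZMod d) := by
    have hz := (ZMod.intCast_zmod_eq_zero_iff_dvd
      (((b₀ : ℕ) : ℤ) - (((x : ℕ) : ℤ) - ((u : ℕ) : ℤ))) d).2 hb₀dvd
    push_cast at hz
    linear_combination hz
  have hiff : ((d : ℤ) ∣ a₁ - (hh : ℤ) * b₀ - ((u : ℕ) : ℤ)) ↔
      ((d : ℤ) ∣ ((u : ℕ) : ℤ) + ((x : ℕ) : ℤ) - 2 * a₁) := by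
    rw [← ZMod.intCast_zmod_eq_zero_iff_dvd, ← ZMod.intCast_zmod_eq_zero_iff_dvd]
    push_cast
    constructor
    · intro hE
      linear_combination (-2 : ZMod d) * hE - ((b₀ : ℕ) : ZMod d) * h2h - hbz
    · intro hE
      have h0 : (2 : ZMod d) * ((a₁ : ZMod d) - (hh : ZMod d) * ((b₀ : ℕ) : ZMod d)
          - (((u : Fin d) : ℕ) : ZMod d)) = 0 := by
        linear_combination -hE - ((b₀ : ℕ) : ZMod d) * h2h - hbz
      exact (h2u.mul_right_eq_zero).1 h0
  simp only [Omat, Matrix.of_apply]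
  by_cases hC : (d : ℤ) ∣ ((u : ℕ) : ℤ) + ((x : ℕ) : ℤ) - 2 * a₁
  · rw [if_pos hC, if_pos (hiff.2 hC)]
    have hexp : Complex.exp (-((Real.pi : ℂ) * Complex.I * ((-(2 * a₂) : ℤ) : ℂ) * ((2 * a₁ : ℤ) : ℂ)) / d) *
        Complex.exp (2 * (Real.pi : ℂ) * Complex.I * ((-(2 * a₂) : ℤ) : ℂ) * ((x : ℕ) : ℂ) / d)
        = ee d (2 * a₁ * a₂ - 2 * a₂ * x) := by
      rw [ee, ← Complex.exp_add, ← add_div]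
      congr 1
      push_cast
      ring
    have hval : ee d (-(a₂ * b₀)) = ee d (2 * a₁ * a₂ - 2 * a₂ * x) := by
      apply ee_dvd_sub
      obtain ⟨m1, hm1⟩ := hb₀dvd
      obtain ⟨m2, hm2⟩ := hC
      exact ⟨-a₂ * m1 + a₂ * m2, by linear_combination (-a₂) * hm1 + a₂ * hm2⟩
    rw [hexp, hval]
    field_simp
  · rw [if_neg hC, if_neg (fun hk => hC (hiff.1 hk)), mul_zero, mul_zero]
end

section
/- Let d ≥ 2 be even. Then Σ_{l=0}^{d−1} Σ_{m=0}^{d−1} |Tr(O_{l,m})| = d²/2; consequently the maximally mixed state 𝟙_d/d satisfies Σ_{l,m=0}^{d−1} |d^{−1} Tr(O_{l,m} · 𝟙_d/d)| = 1/2 < 1, i.e., in even dimensions there exist (hyperpolyhedral) states whose 1-norm of the operator-basis coefficients lies strictly below the value 1 attained by pure stabilizer states. -/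
open Complex Matrix Finset

lemma sum_even_ite (e : ℕ) (A : ℝ) :
    ∑ l ∈ Finset.range (e + e), (if Even l then A else 0) = e * A := by
  induction e with
  | zero => simp
  | succ n ih =>
      rw [show n + 1 + (n + 1) = (n + n) + 1 + 1 by ring, Finset.sum_range_succ,
        Finset.sum_range_succ, ih]
      have h1 : Even (n + n) := ⟨n, rfl⟩
      have h2 : ¬ Even (n + n + 1) := by simp [Nat.even_add_one, h1]
      rw [if_pos h1, if_neg h2]
      push_cast; ring

lemma trace_Omat (d l m e : ℕ) (he : d = e + e) (he1 : 1 ≤ e) (hl : l < d) :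
    Matrix.trace (Omat d l m) = if Even l ∧ Even m then 2 else 0 := by
  classical
  have hd0 : (d : ℂ) ≠ 0 := by
    exact_mod_cast Nat.cast_ne_zero.mpr (by omega)
  rw [Matrix.trace]
  simp only [Matrix.diag, Omat, Matrix.of_apply, Int.cast_natCast]
  rw [Fin.sum_univ_eq_sum_range (fun x : ℕ =>
    if (d : ℤ) ∣ ((x : ℤ) + (x : ℤ) - (l : ℤ)) then
      Complex.exp (-((Real.pi : ℂ) * Complex.I * m * l) / d) *
        Complex.exp (2 * (Real.pi : ℂ) * Complex.I * m * (x : ℂ) / d)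
    else 0) d]
  by_cases hle : Even l
  · obtain ⟨k, hk⟩ := hle
    have hke : k < e := by omega
    rw [← Finset.sum_filter]
    have hset : (Finset.range d).filter
        (fun x : ℕ => (d : ℤ) ∣ ((x : ℤ) + (x : ℤ) - (l : ℤ))) = {k, k + e} := by
      ext x
      simp only [Finset.mem_filter, Finset.mem_range, Finset.mem_insert, Finset.mem_singleton]
      constructor
      · rintro ⟨hx, c, hc⟩
        rw [he] at hc
        push_cast at hc
        have hE : (1 : ℤ) ≤ (e : ℤ) := by exact_mod_cast he1
        have hX : (x : ℤ) < (e : ℤ) + (e : ℤ) := by exact_mod_cast (he ▸ hx)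
        have hK : (k : ℤ) < (e : ℤ) := by exact_mod_cast hke
        have hL : (l : ℤ) = (k : ℤ) + (k : ℤ) := by exact_mod_cast hk
        have hX0 : (0 : ℤ) ≤ (x : ℤ) := Int.natCast_nonneg x
        have hK0 : (0 : ℤ) ≤ (k : ℤ) := Int.natCast_nonneg k
        have hc2 : c < 2 := by
          by_contra h
          push_neg at h
          nlinarith [mul_le_mul_of_nonneg_left h (by linarith : (0:ℤ) ≤ (e:ℤ))]
        have hc0 : 0 ≤ c := by
          by_contra h
          push_neg at h
          have h' : c ≤ -1 := by omega
          nlinarith [mul_le_mul_of_nonneg_left h' (by linarith : (0:ℤ) ≤ (e:ℤ))]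
        interval_cases c <;> omega
      · rintro (rfl | rfl)
        · exact ⟨by omega, ⟨0, by push_cast; omega⟩⟩
        · exact ⟨by omega, ⟨1, by push_cast; omega⟩⟩
    rw [hset, Finset.sum_pair (by omega : k ≠ k + e)]
    have hterm1 : Complex.exp (-((Real.pi : ℂ) * Complex.I * m * l) / d) *
        Complex.exp (2 * (Real.pi : ℂ) * Complex.I * m * (k : ℂ) / d) = 1 := by
      rw [← Complex.exp_add, ← Complex.exp_zero]
      congr 1
      have hL : (l : ℂ) = (k : ℂ) + (k : ℂ) := by exact_mod_cast hk
      field_simp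
      rw [hL]; ring
    have hterm2 : Complex.exp (-((Real.pi : ℂ) * Complex.I * m * l) / d) *
        Complex.exp (2 * (Real.pi : ℂ) * Complex.I * m * ((k + e : ℕ) : ℂ) / d) =
        (-1 : ℂ) ^ m := by
      rw [← Complex.exp_add]
      have : -((Real.pi : ℂ) * Complex.I * m * l) / d +
          2 * (Real.pi : ℂ) * Complex.I * m * ((k + e : ℕ) : ℂ) / d =
          (m : ℂ) * ((Real.pi : ℂ) * Complex.I) := by
        have hL : (l : ℂ) = (k : ℂ) + (k : ℂ) := by exact_mod_cast hk
        have hD : (d : ℂ) = (e : ℂ) + (e : ℂ) := by exact_mod_cast he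
        push_cast
        field_simp
        rw [hL, hD]; ring
      rw [this, Complex.exp_nat_mul, Complex.exp_pi_mul_I]
    rw [hterm1, hterm2]
    by_cases hme : Even m
    · rw [hme.neg_one_pow, if_pos ⟨⟨k, hk⟩, hme⟩]; norm_num
    · rw [(Nat.not_even_iff_odd.mp hme).neg_one_pow,
        if_neg (by tauto)]
      ring
  · rw [if_neg (by tauto)]
    apply Finset.sum_eq_zero
    intro x hx
    rw [if_neg]
    intro hdvd
    have h2 : (2 : ℤ) ∣ ((x : ℤ) + (x : ℤ) - (l : ℤ)) :=
      dvd_trans ⟨(e : ℤ), by push_cast; omega⟩ hdvd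
    exact hle ⟨l / 2, by omega⟩

/-- for even `d ≥ 2`, `Σ_{l,m=0}^{d-1} |Tr(O_{l,m})| = d²/2`;
consequently the maximally mixed state `𝟙/d` satisfies
`Σ_{l,m} |d⁻¹ Tr(O_{l,m} · 𝟙/d)| = 1/2 < 1`, i.e. in even dimensions there exist
(hyperpolyhedral) states whose operator-basis 1-norm lies strictly below the value `1`
attained by pure stabilizer states. -/
theorem Omat_hyperpolyhedral (d : ℕ) (hd : 2 ≤ d) (hde : Even d) :
    (∑ l ∈ Finset.range d, ∑ m ∈ Finset.range d,
      ‖Matrix.trace (Omat d l m)‖ = (d : ℝ) ^ 2 / 2) ∧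
    (∑ l ∈ Finset.range d, ∑ m ∈ Finset.range d,
      ‖(1 / (d : ℂ)) * Matrix.trace (Omat d l m *
        ((1 / (d : ℂ)) • (1 : Matrix (Fin d) (Fin d) ℂ)))‖ = 1 / 2) ∧
    (1 / 2 : ℝ) < 1 := by
  classical
  obtain ⟨e, he⟩ := hde
  have he1 : 1 ≤ e := by omega
  have habs : ∀ l ∈ Finset.range d, ∀ m ∈ Finset.range d,
      ‖Matrix.trace (Omat d l m)‖ =
        if Even l ∧ Even m then (2 : ℝ) else 0 := by
    intro l hl m hm
    rw [trace_Omat d l m e he he1 (Finset.mem_range.mp hl)]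
    by_cases h : Even l ∧ Even m <;> simp [h]
  have hsum_even : ∀ A : ℝ, ∑ l ∈ Finset.range d, (if Even l then A else 0) = e * A := by
    intro A
    rw [he]
    exact sum_even_ite e A
  have hpart1 : ∑ l ∈ Finset.range d, ∑ m ∈ Finset.range d,
      ‖Matrix.trace (Omat d l m)‖ = (d : ℝ) ^ 2 / 2 := by
    rw [Finset.sum_congr rfl (fun l hl => Finset.sum_congr rfl (fun m hm => habs l hl m hm))]
    have hinner : ∀ l : ℕ, ∑ m ∈ Finset.range d, (if Even l ∧ Even m then (2 : ℝ) else 0) =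
        if Even l then (e * 2 : ℝ) else 0 := by
      intro l
      by_cases h : Even l
      · rw [if_pos h, ← hsum_even 2]
        exact Finset.sum_congr rfl fun m _ => by simp [h]
      · rw [if_neg h]
        exact Finset.sum_eq_zero fun m _ => by simp [h]
    rw [Finset.sum_congr rfl (fun l _ => hinner l), hsum_even (e * 2)]
    have : (d : ℝ) = 2 * e := by exact_mod_cast (by omega : d = 2 * e)
    rw [this]; ring
  refine ⟨hpart1, ?_, by norm_num⟩
  have hd0 : (d : ℝ) ≠ 0 := Nat.cast_ne_zero.mpr (by omega)
  have hterm : ∀ l m : ℕ, ‖(1 / (d : ℂ)) * Matrix.trace (Omat d l m *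
      ((1 / (d : ℂ)) • (1 : Matrix (Fin d) (Fin d) ℂ)))‖ =
      (1 / (d : ℝ)) * ((1 / (d : ℝ)) * ‖Matrix.trace (Omat d l m)‖) := by
    intro l m
    rw [Matrix.mul_smul, Matrix.mul_one, Matrix.trace_smul, smul_eq_mul,
      norm_mul, norm_mul]
    simp [map_div₀]
  have key : ∑ l ∈ Finset.range d, ∑ m ∈ Finset.range d,
      ‖(1 / (d : ℂ)) * Matrix.trace (Omat d l m *
        ((1 / (d : ℂ)) • (1 : Matrix (Fin d) (Fin d) ℂ)))‖ =
      (1 / (d : ℝ)) * ((1 / (d : ℝ)) * ((d : ℝ) ^ 2 / 2)) := by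
    rw [← hpart1]
    simp only [hterm, ← Finset.mul_sum]
  rw [key]
  field_simp
end
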